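/- In the presented group G = ⟨g₀, g₁, g₂ | g₀⁴ = g₁²g₂², g₁⁴ = g₂²g₀², g₂⁴ = g₀²g₁², g₂²g₁²g₀² = 1, g₀³g₁³g₂³ = 1⟩, each of the images of the three generators g₀, g₁, g₂ has order exactly 18. -/

import Mathlib

set_option maxHeartbeats 4000000

/-- The five relators of the group
`G = ⟨g₀, g₁, g₂ | g₀⁴ = g₁²g₂², g₁⁴ = g₂²g₀², g₂⁴ = g₀²g₁², g₂²g₁²g₀² = 1, g₀³g₁³g₂³ = 1⟩`
as elements of the free group on three generators. -/
def GRels : Set (FreeGroup (Fin 3)) :=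
  { FreeGroup.of 0 ^ 4 * (FreeGroup.of 1 ^ 2 * FreeGroup.of 2 ^ 2)⁻¹,
    FreeGroup.of 1 ^ 4 * (FreeGroup.of 2 ^ 2 * FreeGroup.of 0 ^ 2)⁻¹,
    FreeGroup.of 2 ^ 4 * (FreeGroup.of 0 ^ 2 * FreeGroup.of 1 ^ 2)⁻¹,
    FreeGroup.of 2 ^ 2 * FreeGroup.of 1 ^ 2 * FreeGroup.of 0 ^ 2,
    FreeGroup.of 0 ^ 3 * FreeGroup.of 1 ^ 3 * FreeGroup.of 2 ^ 3 }

def p0 : Equiv.Perm (Fin 36) :=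
  ⟨![15, 0, 1, 6, 2, 4, 26, 25, 9, 10, 30, 33, 23, 28, 21, 14, 13, 5, 20, 11, 12, 34, 7, 16, 17, 32, 22, 29, 3, 31, 24, 8, 35, 18, 27, 19], ![1, 2, 4, 28, 5, 17, 3, 22, 31, 8, 9, 19, 20, 16, 15, 0, 23, 24, 33, 35, 18, 14, 26, 12, 30, 7, 6, 34, 13, 27, 10, 29, 25, 11, 21, 32], by decide, by decide⟩

def p1 : Equiv.Perm (Fin 36) :=
  ⟨![19, 12, 3, 0, 25, 33, 17, 2, 7, 28, 20, 9, 31, 10, 13, 22, 4, 16, 1, 5, 24, 18, 21, 14, 26, 30, 8, 6, 27, 23, 35, 11, 29, 34, 32, 15], ![3, 18, 7, 2, 16, 19, 27, 8, 26, 11, 13, 31, 1, 14, 23, 35, 17, 6, 21, 0, 10, 22, 15, 29, 20, 4, 24, 28, 9, 32, 25, 12, 34, 5, 33, 30], by decide, by decide⟩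

def p2 : Equiv.Perm (Fin 36) :=
  ⟨![18, 7, 16, 9, 19, 6, 2, 15, 12, 26, 11, 0, 10, 17, 35, 3, 29, 20, 5, 30, 21, 23, 24, 1, 25, 8, 27, 33, 14, 28, 13, 32, 4, 31, 22, 34], ![11, 23, 6, 15, 32, 18, 5, 1, 25, 3, 12, 10, 8, 30, 28, 7, 2, 13, 0, 4, 17, 20, 34, 21, 22, 24, 9, 26, 29, 16, 19, 33, 31, 27, 35, 14], by decide, by decide⟩

def fperm : Fin 3 → Equiv.Perm (Fin 36) := ![p0, p1, p2]

lemma rels_mapped : ∀ r ∈ GRels, FreeGroup.lift fperm r = 1 := by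
  intro r hr
  simp only [GRels, Set.mem_insert_iff, Set.mem_singleton_iff] at hr
  rcases hr with rfl | rfl | rfl | rfl | rfl <;>
    · simp only [map_mul, map_pow, map_inv, FreeGroup.lift_apply_of]
      decide

noncomputable def φ : PresentedGroup GRels →* Equiv.Perm (Fin 36) :=
  PresentedGroup.toGroup rels_mapped


lemma key {M : Type*} [Group M] (x y z : M) (h1 : x * x = y * z)
    (h2 : y * y = z * x) (h4 : z = x⁻¹ * y⁻¹) : x ^ 9 = 1 := by
  have hA0 : x * x = y * x⁻¹ * y⁻¹ := by rw [h1, h4]; group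
  have hAp : y * x * y⁻¹ = (x * x)⁻¹ := by rw [hA0]; group
  have hB : y * y = x⁻¹ * y⁻¹ * x := by rw [h2, h4]
  have hC : y * y * x * (y * y)⁻¹ = x * x * x * x := by
    calc y * y * x * (y * y)⁻¹ = y * (y * x * y⁻¹) * y⁻¹ := by (group; try norm_num [zpow_ofNat, pow_succ, mul_assoc])
    _ = y * (x * x)⁻¹ * y⁻¹ := by rw [hAp]
    _ = (y * x * y⁻¹)⁻¹ * (y * x * y⁻¹)⁻¹ := by (group; try norm_num [zpow_ofNat, pow_succ, mul_assoc])
    _ = ((x * x)⁻¹)⁻¹ * ((x * x)⁻¹)⁻¹ := by rw [hAp]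
    _ = x * x * x * x := by (group; try norm_num [zpow_ofNat, pow_succ, mul_assoc])
  have hC' : (x⁻¹ * y⁻¹ * x) * x * (x⁻¹ * y⁻¹ * x)⁻¹ = x * x * x * x := by
    rw [← hB]; exact hC
  have hD : y⁻¹ * x * y = x * x * x * x := by
    calc y⁻¹ * x * y = x * ((x⁻¹ * y⁻¹ * x) * x * (x⁻¹ * y⁻¹ * x)⁻¹) * x⁻¹ := by (group; try norm_num [zpow_ofNat, pow_succ, mul_assoc])
    _ = x * (x * x * x * x) * x⁻¹ := by rw [hC']
    _ = x * x * x * x := by (group; try norm_num [zpow_ofNat, pow_succ, mul_assoc])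
  have hE : x = (x * x * x * x)⁻¹ * (x * x * x * x)⁻¹ := by
    calc x = y⁻¹ * (y * x * y⁻¹) * y := by (group; try norm_num [zpow_ofNat, pow_succ, mul_assoc])
    _ = y⁻¹ * (x * x)⁻¹ * y := by rw [hAp]
    _ = (y⁻¹ * x * y)⁻¹ * (y⁻¹ * x * y)⁻¹ := by (group; try norm_num [zpow_ofNat, pow_succ, mul_assoc])
    _ = (x * x * x * x)⁻¹ * (x * x * x * x)⁻¹ := by rw [hD]
  have hF : x * ((x * x * x * x) * (x * x * x * x))
      = ((x * x * x * x)⁻¹ * (x * x * x * x)⁻¹) * ((x * x * x * x) * (x * x * x * x)) := by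
    rw [← hE]
  calc x ^ 9 = x * ((x * x * x * x) * (x * x * x * x)) := by (group; try norm_num [zpow_ofNat, pow_succ, mul_assoc])
  _ = ((x * x * x * x)⁻¹ * (x * x * x * x)⁻¹) * ((x * x * x * x) * (x * x * x * x)) := hF
  _ = 1 := by (group; try norm_num [zpow_ofNat, pow_succ, mul_assoc])

section Rels

local notation "a" => (PresentedGroup.of 0 : PresentedGroup GRels)
local notation "b" => (PresentedGroup.of 1 : PresentedGroup GRels)
local notation "c" => (PresentedGroup.of 2 : PresentedGroup GRels)

lemma relho (r : FreeGroup (Fin 3)) (hr : r ∈ GRels) :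
    (QuotientGroup.mk' (Subgroup.normalClosure GRels)) r = 1 :=
  (QuotientGroup.eq_one_iff _).mpr (Subgroup.subset_normalClosure hr)

lemma hr1 : a ^ 4 * (b ^ 2 * c ^ 2)⁻¹ = 1 := by
  have h := relho _ (Set.mem_insert _ _)
  exact h

lemma hr2 : b ^ 4 * (c ^ 2 * a ^ 2)⁻¹ = 1 := by
  have h := relho _ (Set.mem_insert_of_mem _ (Set.mem_insert _ _))
  exact h

lemma hr3 : c ^ 4 * (a ^ 2 * b ^ 2)⁻¹ = 1 := by
  have h := relho _ (Set.mem_insert_of_mem _ (Set.mem_insert_of_mem _ (Set.mem_insert _ _)))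
  exact h

lemma hr4 : c ^ 2 * b ^ 2 * a ^ 2 = 1 := by
  have h := relho _ (Set.mem_insert_of_mem _ (Set.mem_insert_of_mem _
    (Set.mem_insert_of_mem _ (Set.mem_insert _ _))))
  exact h

lemma q1 : (a * a) * (a * a) = (b * b) * (c * c) := by
  calc (a * a) * (a * a) = (a ^ 4 * (b ^ 2 * c ^ 2)⁻¹) * ((b * b) * (c * c)) := by (group; try norm_num [zpow_ofNat, pow_succ, mul_assoc])
  _ = 1 * ((b * b) * (c * c)) := by rw [hr1]
  _ = (b * b) * (c * c) := one_mul _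

lemma q2 : (b * b) * (b * b) = (c * c) * (a * a) := by
  calc (b * b) * (b * b) = (b ^ 4 * (c ^ 2 * a ^ 2)⁻¹) * ((c * c) * (a * a)) := by (group; try norm_num [zpow_ofNat, pow_succ, mul_assoc])
  _ = 1 * ((c * c) * (a * a)) := by rw [hr2]
  _ = (c * c) * (a * a) := one_mul _

lemma q3 : (c * c) * (c * c) = (a * a) * (b * b) := by
  calc (c * c) * (c * c) = (c ^ 4 * (a ^ 2 * b ^ 2)⁻¹) * ((a * a) * (b * b)) := by (group; try norm_num [zpow_ofNat, pow_succ, mul_assoc])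
  _ = 1 * ((a * a) * (b * b)) := by rw [hr3]
  _ = (a * a) * (b * b) := one_mul _

lemma q4a : (c * c) = (a * a)⁻¹ * (b * b)⁻¹ := by
  calc c * c = (c ^ 2 * b ^ 2 * a ^ 2) * ((a * a)⁻¹ * (b * b)⁻¹) := by (group; try norm_num [zpow_ofNat, pow_succ, mul_assoc])
  _ = 1 * ((a * a)⁻¹ * (b * b)⁻¹) := by rw [hr4]
  _ = (a * a)⁻¹ * (b * b)⁻¹ := one_mul _

lemma q4b : (a * a) = (b * b)⁻¹ * (c * c)⁻¹ := by
  calc a * a = ((b * b)⁻¹ * (c * c)⁻¹) * (c ^ 2 * b ^ 2 * a ^ 2) := by (group; try norm_num [zpow_ofNat, pow_succ, mul_assoc])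
  _ = ((b * b)⁻¹ * (c * c)⁻¹) * 1 := by rw [hr4]
  _ = (b * b)⁻¹ * (c * c)⁻¹ := mul_one _

lemma q4c : (b * b) = (c * c)⁻¹ * (a * a)⁻¹ := by
  have h : (c * c)⁻¹ * (c ^ 2 * b ^ 2 * a ^ 2) * (a * a)⁻¹
      = (c * c)⁻¹ * 1 * (a * a)⁻¹ := by rw [hr4]
  calc b * b = (c * c)⁻¹ * (c ^ 2 * b ^ 2 * a ^ 2) * (a * a)⁻¹ := by (group; try norm_num [zpow_ofNat, pow_succ, mul_assoc])
  _ = (c * c)⁻¹ * 1 * (a * a)⁻¹ := h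
  _ = (c * c)⁻¹ * (a * a)⁻¹ := by (group; try norm_num [zpow_ofNat, pow_succ, mul_assoc])

lemma pow18_0 : (PresentedGroup.of 0 : PresentedGroup GRels) ^ 18 = 1 := by
  have h9 := key (a * a) (b * b) (c * c) q1 q2 q4a
  calc a ^ 18 = (a * a) ^ 9 := by (group; try norm_num [zpow_ofNat, pow_succ, mul_assoc])
  _ = 1 := h9

lemma pow18_1 : (PresentedGroup.of 1 : PresentedGroup GRels) ^ 18 = 1 := by
  have h9 := key (b * b) (c * c) (a * a) q2 q3 q4b
  calc b ^ 18 = (b * b) ^ 9 := by (group; try norm_num [zpow_ofNat, pow_succ, mul_assoc])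
  _ = 1 := h9

lemma pow18_2 : (PresentedGroup.of 2 : PresentedGroup GRels) ^ 18 = 1 := by
  have h9 := key (c * c) (a * a) (b * b) q3 q1 q4c
  calc c ^ 18 = (c * c) ^ 9 := by (group; try norm_num [zpow_ofNat, pow_succ, mul_assoc])
  _ = 1 := h9

end Rels

lemma aux18 (n : ℕ) (h : n ∣ 18) (h6 : ¬ n ∣ 6) (h9 : ¬ n ∣ 9) : n = 18 := by
  have h1 : n ≤ 18 := Nat.le_of_dvd (by norm_num) h
  have h0 : 1 ≤ n := Nat.pos_of_dvd_of_pos h (by norm_num)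
  interval_cases n <;> revert h h6 h9 <;> decide

/-- In the presented group `G`, the image of each generator has order exactly 18. -/
theorem presentedGroup_generators_orderOf_eq_18 :
    ∀ i : Fin 3, orderOf (PresentedGroup.of i : PresentedGroup GRels) = 18 := by
  intro i
  have hpow : (PresentedGroup.of i : PresentedGroup GRels) ^ 18 = 1 := by
    fin_cases i
    · exact pow18_0
    · exact pow18_1
    · exact pow18_2
  have hdvd : orderOf (PresentedGroup.of i : PresentedGroup GRels) ∣ 18 :=
    orderOf_dvd_of_pow_eq_one hpow
  have himg : ∀ n : ℕ, (PresentedGroup.of i : PresentedGroup GRels) ^ n = 1 →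
      (fperm i) ^ n = 1 := by
    intro n hn
    have := congrArg φ hn
    rw [map_pow, map_one] at this
    rwa [show φ (PresentedGroup.of i) = fperm i from PresentedGroup.toGroup.of rels_mapped] at this
  have h6 : ¬ orderOf (PresentedGroup.of i : PresentedGroup GRels) ∣ 6 := by
    rw [orderOf_dvd_iff_pow_eq_one]
    intro hn
    have := himg 6 hn
    revert this
    fin_cases i <;> decide
  have h9 : ¬ orderOf (PresentedGroup.of i : PresentedGroup GRels) ∣ 9 := by
    rw [orderOf_dvd_iff_pow_eq_one]
    intro hn
    have := himg 9 hn
    revert this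
    fin_cases i <;> decide
  exact aux18 _ hdvd h6 h9
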